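/- If |w - a| ≤ r and |w - z_1| > r with z_1 ≠ a, then Re((z_1 - w) * conj(z_1 - a)) > |z_1 - a|²/2 > 0; in particular the vector z_1 - w lies in the open half-plane determined by the direction z_1 - a. -/

import Mathlib

theorem stmt_8 (a z₁ w : ℂ) (r : ℝ) (hr : 0 < r) (hne : z₁ ≠ a)
    (hwa : ‖w - a‖ ≤ r) (hwz : r < ‖w - z₁‖) :
    ((z₁ - w) * (starRingEnd ℂ) (z₁ - a)).re > (‖z₁ - a‖) ^ 2 / 2 ∧
    (‖z₁ - a‖) ^ 2 / 2 > 0 := by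
  have h1 : ‖w - a‖ ^ 2 ≤ r ^ 2 := by
    have := norm_nonneg (w - a)
    nlinarith
  have h2 : r ^ 2 < ‖w - z₁‖ ^ 2 := by nlinarith [norm_nonneg (w - z₁)]
  have h3 : z₁ - a ≠ 0 := sub_ne_zero.mpr hne
  have h4 : 0 < ‖z₁ - a‖ := norm_pos_iff.mpr h3
  have h5 : 0 < ‖z₁ - a‖ ^ 2 := by positivity
  rw [Complex.sq_norm] at h1 h2 h5 ⊢
  constructor
  · simp only [Complex.normSq_apply, Complex.mul_re, Complex.sub_re, Complex.sub_im,
      Complex.conj_re, Complex.conj_im] at *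
    nlinarith
  · linarith
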